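/- Let $F : \mathbb{R}^d \to \mathbb{R}$ be differentiable with $L$-Lipschitz gradient, let $0 < c_l \leq c_u$, $\eta > 0$ with $\eta L \leq \frac{c_l}{2 c_u^2}$, and let $\tilde\eta$ satisfy $\eta c_l \leq \tilde\eta \leq \eta c_u$. For $w^+ = w - \tilde\eta z$ with $z \in \mathbb{R}^d$, it holds that $F(w^+) \leq F(w) + \frac{\eta c_u}{2}\|\nabla F(w) - z\|^2 - \frac{\eta c_l}{2}\|\nabla F(w)\|^2 - \frac{\eta c_l}{4}\|z\|^2$. -/

import Mathlib

open RealInnerProductSpace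

lemma descent_aux {d : ℕ} (F : EuclideanSpace ℝ (Fin d) → ℝ) (L : ℝ)
    (hF : Differentiable ℝ F)
    (hLip : ∀ x y, ‖gradient F x - gradient F y‖ ≤ L * ‖x - y‖)
    (x v : EuclideanSpace ℝ (Fin d)) :
    F (x + v) ≤ F x + ⟪gradient F x, v⟫ + L / 2 * ‖v‖ ^ 2 := by
  set g : ℝ → ℝ := fun t => F (x + t • v) - t * ⟪gradient F x, v⟫ - L * t ^ 2 / 2 * ‖v‖ ^ 2
    with hg
  have hderiv : ∀ t : ℝ, HasDerivAt g
      (⟪gradient F (x + t • v), v⟫ - ⟪gradient F x, v⟫ - L * t * ‖v‖ ^ 2) t := by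
    intro t
    have h1 : HasDerivAt (fun t : ℝ => x + t • v) v t := by
      simpa using ((hasDerivAt_id t).smul_const v).const_add x
    have h2 : HasFDerivAt F ((InnerProductSpace.toDual ℝ _) (gradient F (x + t • v)))
        (x + t • v) := (hF _).hasGradientAt.hasFDerivAt
    have h3 : HasDerivAt (fun t : ℝ => F (x + t • v)) ⟪gradient F (x + t • v), v⟫ t := by
      exact h2.comp_hasDerivAt t h1
    have h4 : HasDerivAt (fun t : ℝ => t * ⟪gradient F x, v⟫) ⟪gradient F x, v⟫ t := by
      simpa using (hasDerivAt_id t).mul_const _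
    have h5 : HasDerivAt (fun t : ℝ => L * t ^ 2 / 2 * ‖v‖ ^ 2) (L * t * ‖v‖ ^ 2) t := by
      have := ((hasDerivAt_pow 2 t).const_mul L).div_const 2
      have := this.mul_const (‖v‖ ^ 2)
      convert this using 1
      · rfl
      · rfl
      norm_num only
      ring
    exact (h3.sub h4).sub h5
  have hanti : AntitoneOn g (Set.Icc (0 : ℝ) 1) := by
    apply antitoneOn_of_deriv_nonpos (convex_Icc 0 1)
    · exact (Differentiable.continuous (fun t => (hderiv t).differentiableAt)).continuousOn
    · intro t ht
      exact ((hderiv t).differentiableAt).differentiableWithinAt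
    · intro t ht
      rw [(hderiv t).deriv]
      have ht0 : 0 ≤ t := le_of_lt (by simpa using (Set.mem_Ioo.mp (by simpa using ht)).1)
      have hb : ⟪gradient F (x + t • v) - gradient F x, v⟫ ≤ L * t * ‖v‖ ^ 2 := by
        calc ⟪gradient F (x + t • v) - gradient F x, v⟫
            ≤ ‖gradient F (x + t • v) - gradient F x‖ * ‖v‖ := real_inner_le_norm _ _
          _ ≤ (L * ‖(x + t • v) - x‖) * ‖v‖ :=
              mul_le_mul_of_nonneg_right (hLip _ _) (norm_nonneg v)
          _ = L * t * ‖v‖ ^ 2 := by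
              simp [norm_smul, abs_of_nonneg ht0]; ring
      have := inner_sub_left (𝕜 := ℝ) (gradient F (x + t • v)) (gradient F x) v
      linarith [hb, this]
  have := hanti (Set.left_mem_Icc.mpr zero_le_one) (Set.right_mem_Icc.mpr zero_le_one) zero_le_one
  simp only [hg] at this
  simp only [zero_smul, add_zero, one_smul, zero_mul, zero_pow, mul_zero, sub_zero,
    one_pow, mul_one] at this
  nlinarith [this]

theorem adaptive_descent_lemma {d : ℕ} (F : EuclideanSpace ℝ (Fin d) → ℝ)
    (L η cl cu η' : ℝ) (hF : Differentiable ℝ F)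
    (hLip : ∀ x y, ‖gradient F x - gradient F y‖ ≤ L * ‖x - y‖)
    (hcl : 0 < cl) (hclu : cl ≤ cu) (hη : 0 < η) (hηL : η * L ≤ cl / (2 * cu ^ 2))
    (hη'l : η * cl ≤ η') (hη'u : η' ≤ η * cu)
    (w z : EuclideanSpace ℝ (Fin d)) :
    F (w - η' • z) ≤ F w + (η * cu / 2) * ‖gradient F w - z‖ ^ 2
      - (η * cl / 2) * ‖gradient F w‖ ^ 2 - (η * cl / 4) * ‖z‖ ^ 2 := by
  have hcu : 0 < cu := lt_of_lt_of_le hcl hclu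
  have hη' : 0 < η' := lt_of_lt_of_le (by positivity) hη'l
  have key := descent_aux F L hF hLip w (-(η' • z))
  have hsub : w + -(η' • z) = w - η' • z := by abel
  rw [hsub] at key
  have hip : ⟪gradient F w, -(η' • z)⟫ = -(η' * ⟪gradient F w, z⟫) := by
    rw [inner_neg_right, real_inner_smul_right]
  have hnorm : ‖-(η' • z)‖ ^ 2 = η' ^ 2 * ‖z‖ ^ 2 := by
    rw [norm_neg, norm_smul, Real.norm_eq_abs, mul_pow, sq_abs]
  rw [hip, hnorm] at key
  have hpolar : ‖gradient F w - z‖ ^ 2 = ‖gradient F w‖ ^ 2 - 2 * ⟪gradient F w, z⟫ + ‖z‖ ^ 2 :=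
    norm_sub_sq_real _ _
  rcases eq_or_ne z 0 with rfl | hz
  · simp only [norm_zero, zero_pow, mul_zero] at *
    nlinarith [key, sq_nonneg ‖gradient F w‖, mul_pos hη hcl, mul_pos hη hcu, hpolar]
  · have hL : 0 ≤ L := by
      have := hLip 0 z
      simp only [zero_sub, norm_neg] at this
      have hgz : (0:ℝ) ≤ ‖gradient F 0 - gradient F z‖ := norm_nonneg _
      have hzpos : 0 < ‖z‖ := norm_pos_iff.mpr hz
      nlinarith
    have hb1 : L * η' ^ 2 ≤ L * (η * cu) ^ 2 := by
      apply mul_le_mul_of_nonneg_left _ hL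
      exact pow_le_pow_left₀ (le_of_lt hη') hη'u 2
    have hb2 : L * (η * cu) ^ 2 ≤ η * cl / 2 := by
      have h := mul_le_mul_of_nonneg_left hηL (le_of_lt (mul_pos hη (by positivity : (0:ℝ) < cu ^ 2)))
      calc L * (η * cu) ^ 2 = (η * cu ^ 2) * (η * L) := by ring
        _ ≤ (η * cu ^ 2) * (cl / (2 * cu ^ 2)) := h
        _ = η * cl / 2 := by field_simp
    have hznn : (0:ℝ) ≤ ‖z‖ ^ 2 := sq_nonneg _
    nlinarith [key, hpolar, mul_le_mul_of_nonneg_right (hb1.trans hb2) hznn,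
      mul_le_mul_of_nonneg_right hη'l (sq_nonneg ‖gradient F w‖),
      mul_le_mul_of_nonneg_right hη'u (sq_nonneg ‖gradient F w - z‖)]
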